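/- arXiv:2310.04176 — 4 statements merged into one kernel-verified Lean document; each statement's English description precedes it below -/
import Mathlib

section
/- A joint strategy x* in the shared constraint set X is a Nash equilibrium of the N-player game if and only if for every player i, x* is a Pareto optimal point (with respect to the natural ordering cone) of the multi-objective problem of minimizing the vector-valued map x ↦ (x_{-i}, -x_{-i}, f_i(x)) over X. -/
/-- The objective map `x ↦ (x_{-i}, -x_{-i}, f_i(x))` of the multi-objective
problem associated to player `i`. -/
def gameObjective {N : ℕ} (n : Fin N → ℕ) (i : Fin N)
    (fi : (∀ j, Fin (n j) → ℝ) → ℝ) (x : ∀ j, Fin (n j) → ℝ) :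
    (∀ j : {j : Fin N // j ≠ i}, Fin (n j.1) → ℝ) ×
      (∀ j : {j : Fin N // j ≠ i}, Fin (n j.1) → ℝ) × ℝ :=
  (fun j => x j.1, fun j => -(x j.1), fi x)

/-- A joint strategy `x*` in the shared constraint set `X` is a Nash equilibrium
iff for every player `i`, `x*` is Pareto optimal (w.r.t. the componentwise,
i.e. natural ordering cone, order) for `min { (x_{-i}, -x_{-i}, f_i(x)) : x ∈ X }`. -/
theorem nash_iff_pareto {N : ℕ} (hN : 2 ≤ N) (n : Fin N → ℕ)
    (X : Set (∀ j, Fin (n j) → ℝ))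
    (f : Fin N → (∀ j, Fin (n j) → ℝ) → ℝ)
    (xstar : ∀ j, Fin (n j) → ℝ) (hxstar : xstar ∈ X) :
    (∀ i : Fin N, ∀ xi : Fin (n i) → ℝ,
        Function.update xstar i xi ∈ X →
          f i (Function.update xstar i xi) ≥ f i xstar)
      ↔
    (∀ i : Fin N, ¬ ∃ x ∈ X,
        gameObjective n i (f i) x ≤ gameObjective n i (f i) xstar ∧
        gameObjective n i (f i) x ≠ gameObjective n i (f i) xstar) := by
  constructor
  · intro hNash i ⟨x, hxX, hle, hne⟩
    obtain ⟨h1, h2, h3⟩ : (∀ j : {j : Fin N // j ≠ i}, (fun k => x j.1 k) ≤ fun k => xstar j.1 k) ∧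
        (∀ j : {j : Fin N // j ≠ i}, (fun k => -(x j.1 k)) ≤ fun k => -(xstar j.1 k)) ∧
        f i x ≤ f i xstar := by
      obtain ⟨a, b, c⟩ := hle
      exact ⟨a, b, c⟩
    have heq : ∀ j : Fin N, j ≠ i → x j = xstar j := by
      intro j hj
      funext k
      exact le_antisymm (h1 ⟨j, hj⟩ k) (by simpa using h2 ⟨j, hj⟩ k)
    have hx : x = Function.update xstar i (x i) := by
      funext j
      by_cases hj : j = i
      · subst hj; simp
      · rw [Function.update_of_ne hj]; exact heq j hj
    have hge := hNash i (x i) (hx ▸ hxX)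
    rw [← hx] at hge
    have hfeq : f i x = f i xstar := le_antisymm h3 hge
    apply hne
    have hxall : ∀ j : {j : Fin N // j ≠ i}, x j.1 = xstar j.1 := fun j => heq j.1 j.2
    simp only [gameObjective, Prod.ext_iff]
    refine ⟨funext fun j => hxall j, funext fun j => by rw [hxall j], hfeq⟩
  · intro hPareto i xi hmem
    by_contra hlt
    push_neg at hlt
    apply hPareto i
    refine ⟨Function.update xstar i xi, hmem, ?_, ?_⟩
    · refine ⟨fun j k => ?_, fun j k => ?_, le_of_lt hlt⟩
      · simp only [gameObjective]; rw [Function.update_of_ne j.2]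
      · simp only [gameObjective]; rw [Function.update_of_ne j.2]
    · intro h
      have := congrArg (fun p => p.2.2) h
      simp only [gameObjective] at this
      exact absurd this (ne_of_lt hlt)
end

section
/- For any ε > 0, a joint strategy x* ∈ X is an ε-approximate Nash equilibrium if and only if for every player i, x* is an ε-Pareto optimal point with respect to the direction c̄_i = (0,...,0,1) of the multi-objective problem of minimizing x ↦ (x_{-i}, -x_{-i}, f_i(x)) over X. -/
/-- `g(x*) - ε c̄_i` where `c̄_i = (0,...,0,1)` is the last standard basis vector:
only the last (cost) component of the objective is shifted down by `ε`. -/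
def gameObjectiveShift {N : ℕ} (n : Fin N → ℕ) (i : Fin N)
    (fi : (∀ j, Fin (n j) → ℝ) → ℝ) (ε : ℝ) (x : ∀ j, Fin (n j) → ℝ) :
    (∀ j : {j : Fin N // j ≠ i}, Fin (n j.1) → ℝ) ×
      (∀ j : {j : Fin N // j ≠ i}, Fin (n j.1) → ℝ) × ℝ :=
  (fun j => x j.1, fun j => -(x j.1), fi x - ε)

/-- For every `ε > 0`, `x* ∈ X` is an `ε`-approximate Nash equilibrium iff for
every player `i`, `x*` is `ε`-Pareto optimal with respect to the direction
`c̄_i = (0,...,0,1)` for `min { (x_{-i}, -x_{-i}, f_i(x)) : x ∈ X }`, i.e.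
`(g(x*) - ε c̄_i - ℝ^{m_i}_+ \ {0}) ∩ g[X] = ∅`. -/
theorem epsNash_iff_epsPareto {N : ℕ} (hN : 2 ≤ N) (n : Fin N → ℕ)
    (X : Set (∀ j, Fin (n j) → ℝ))
    (f : Fin N → (∀ j, Fin (n j) → ℝ) → ℝ)
    (ε : ℝ) (hε : 0 < ε)
    (xstar : ∀ j, Fin (n j) → ℝ) (hxstar : xstar ∈ X) :
    (∀ i : Fin N, ∀ xi : Fin (n i) → ℝ,
        Function.update xstar i xi ∈ X →
          f i (Function.update xstar i xi) + ε ≥ f i xstar)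
      ↔
    (∀ i : Fin N, ¬ ∃ x ∈ X,
        gameObjective n i (f i) x ≤ gameObjectiveShift n i (f i) ε xstar ∧
        gameObjective n i (f i) x ≠ gameObjectiveShift n i (f i) ε xstar) := by
  constructor
  · intro h i
    rintro ⟨x, hxX, hle, hne⟩
    obtain ⟨h1, h2, h3⟩ := hle
    simp only [gameObjective, gameObjectiveShift] at h1 h2 h3
    have hxj : ∀ j : {j : Fin N // j ≠ i}, x j.1 = xstar j.1 := by
      intro j
      have h1' := h1 j
      have h2' := h2 j
      exact le_antisymm h1' (by intro k; have := h2' k; simp at this; linarith)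
    have hx : x = Function.update xstar i (x i) := by
      funext j
      by_cases hj : j = i
      · subst hj; simp
      · rw [Function.update_of_ne hj]; exact hxj ⟨j, hj⟩
    have hNash := h i (x i) (hx ▸ hxX)
    rw [← hx] at hNash
    have h3' : f i x ≤ f i xstar - ε := h3
    have hfe : f i x = f i xstar - ε := le_antisymm h3' (by linarith)
    apply hne
    unfold gameObjective gameObjectiveShift
    refine Prod.ext ?_ (Prod.ext ?_ hfe)
    · funext j; exact hxj j
    · funext j; simp [hxj j]
  · intro h i xi hX
    by_contra hlt
    push_neg at hlt
    apply h i
    refine ⟨Function.update xstar i xi, hX, ?_, ?_⟩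
    · simp only [gameObjective, gameObjectiveShift]
      refine ⟨?_, ?_, ?_⟩
      · intro j; simp [Function.update_of_ne j.2]
      · intro j; simp [Function.update_of_ne j.2]
      · show f i (Function.update xstar i xi) ≤ f i xstar - ε
        linarith
    · intro heq
      have := congrArg (fun p => p.2.2) heq
      simp only [gameObjective, gameObjectiveShift] at this
      linarith
end

section
/- Suppose for each player i we have a set X_i with argmin_Pareto{(x_{-i}, -x_{-i}, f_i(x)) : x ∈ X} ⊆ X_i ⊆ ε-argmin{(x_{-i}, -x_{-i}, f_i(x)) : x ∈ X} (ε-Pareto with respect to direction c̄_i). Then X := ∩_{i=1}^N X_i satisfies NE(f, X) ⊆ X ⊆ εNE(f, X). -/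
/-- If for each player `i` the set `Xi i` is sandwiched between the Pareto
optimal points and the `ε`-Pareto optimal points (w.r.t. `c̄_i`) of
`min { (x_{-i}, -x_{-i}, f_i(x)) : x ∈ X }`, then `⋂ i, Xi i` is sandwiched
between `NE(f, X)` and `εNE(f, X)`. -/
theorem sandwich_from_playerwise_sandwich {N : ℕ} (hN : 2 ≤ N) (n : Fin N → ℕ)
    (X : Set (∀ j, Fin (n j) → ℝ))
    (f : Fin N → (∀ j, Fin (n j) → ℝ) → ℝ)
    (ε : ℝ) (hε : 0 < ε)
    (Xi : Fin N → Set (∀ j, Fin (n j) → ℝ))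
    (hlower : ∀ i : Fin N,
      {x ∈ X | ¬ ∃ x' ∈ X,
          gameObjective n i (f i) x' ≤ gameObjective n i (f i) x ∧
          gameObjective n i (f i) x' ≠ gameObjective n i (f i) x} ⊆ Xi i)
    (hupper : ∀ i : Fin N,
      Xi i ⊆ {x ∈ X | ¬ ∃ x' ∈ X,
          gameObjective n i (f i) x' ≤ gameObjectiveShift n i (f i) ε x ∧
          gameObjective n i (f i) x' ≠ gameObjectiveShift n i (f i) ε x}) :
    {x ∈ X | ∀ i : Fin N, ∀ xi : Fin (n i) → ℝ,
        Function.update x i xi ∈ X → f i (Function.update x i xi) ≥ f i x}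
      ⊆ (⋂ i : Fin N, Xi i)
    ∧ (⋂ i : Fin N, Xi i)
      ⊆ {x ∈ X | ∀ i : Fin N, ∀ xi : Fin (n i) → ℝ,
          Function.update x i xi ∈ X → f i (Function.update x i xi) + ε ≥ f i x} := by
  constructor
  · rintro x ⟨hxX, hNE⟩
    refine Set.mem_iInter.2 fun i => hlower i ⟨hxX, ?_⟩
    rintro ⟨x', hx'X, hle, hne⟩
    obtain ⟨h1, h2, h3⟩ := hle
    have heq : ∀ j : {j : Fin N // j ≠ i}, x' j.1 = x j.1 := fun j =>
      le_antisymm (h1 j) (neg_le_neg_iff.mp (h2 j))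
    have hupd : x' = Function.update x i (x' i) := by
      funext j
      by_cases hj : j = i
      · subst hj; simp
      · rw [Function.update_of_ne hj]; exact heq ⟨j, hj⟩
    have hge : f i x' ≥ f i x := by
      have := hNE i (x' i) (hupd ▸ hx'X)
      rwa [← hupd] at this
    have hfeq : f i x' = f i x := le_antisymm h3 hge
    apply hne
    unfold gameObjective
    refine Prod.ext (funext heq) (Prod.ext (funext fun j => by simp [heq j]) hfeq)
  · intro x hx
    have hxi : ∀ i, x ∈ Xi i := Set.mem_iInter.1 hx
    have i0 : Fin N := ⟨0, by omega⟩
    refine ⟨(hupper i0 (hxi i0)).1, fun i xi hupdX => ?_⟩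
    by_contra habs
    push_neg at habs
    have hlt : f i (Function.update x i xi) < f i x - ε := by linarith
    refine (hupper i (hxi i)).2 ⟨Function.update x i xi, hupdX, ?_, ?_⟩
    · refine ⟨fun j => ?_, fun j => ?_, le_of_lt hlt⟩
      · simp [gameObjective, gameObjectiveShift, Function.update_of_ne j.2]
      · simp [gameObjective, gameObjectiveShift, Function.update_of_ne j.2]
    · intro hcontra
      have := congrArg (fun p => p.2.2) hcontra
      simp only [gameObjective, gameObjectiveShift] at this
      linarith
end

section
/- In the two-player pollution game with f_i(x) = ½(x₁ + x₂)² − β_i x_i, β₁ = 1.1, β₂ = 2, and shared constraint set X = {(x₁, x₂) ∈ [0,1]² : x₁ + 0.4·x₂ ≤ 1}, the set of Nash equilibria is {(1/10, 1)} ∪ {(x₁, (5/2)(1 − x₁)) : x₁ ∈ [14/15, 1]}. -/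
set_option maxHeartbeats 1000000 in
open Set in
/-- In the two-player pollution game with `fᵢ(x) = ½(x₁+x₂)² − βᵢxᵢ`,
`β₁ = 1.1`, `β₂ = 2`, and shared constraint set
`X = {(x₁,x₂) ∈ [0,1]² : x₁ + 0.4x₂ ≤ 1}`, the set of Nash equilibria is
`{(1/10, 1)} ∪ {(x₁, (5/2)(1−x₁)) : x₁ ∈ [14/15, 1]}`. -/
theorem nash_set_pollution_example :
    {p : ℝ × ℝ | (p.1 ∈ Icc (0 : ℝ) 1 ∧ p.2 ∈ Icc (0 : ℝ) 1 ∧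
        p.1 + 0.4 * p.2 ≤ 1) ∧
      (∀ x₁ ∈ Icc (0 : ℝ) 1, x₁ + 0.4 * p.2 ≤ 1 →
        (1/2) * (x₁ + p.2) ^ 2 - 1.1 * x₁ ≥
        (1/2) * (p.1 + p.2) ^ 2 - 1.1 * p.1) ∧
      (∀ x₂ ∈ Icc (0 : ℝ) 1, p.1 + 0.4 * x₂ ≤ 1 →
        (1/2) * (p.1 + x₂) ^ 2 - 2 * x₂ ≥
        (1/2) * (p.1 + p.2) ^ 2 - 2 * p.2)}
    = {((1/10 : ℝ), (1 : ℝ))} ∪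
      {p : ℝ × ℝ | ∃ x₁ ∈ Icc (14/15 : ℝ) 1, p = (x₁, (5/2) * (1 - x₁))} := by
  ext ⟨a, b⟩
  simp only [Set.mem_setOf_eq, Set.mem_union, Set.mem_singleton_iff, Set.mem_Icc,
    Prod.mk.injEq]
  constructor
  · rintro ⟨⟨⟨ha0, ha1⟩, ⟨hb0, hb1⟩, hab⟩, h1, h2⟩
    by_cases hc : (1 : ℝ) ≤ (5/2) * (1 - a)
    · -- a ≤ 3/5, so player 2's best response is 1, hence b = 1, then a = 1/10
      have hs := h2 1 ⟨by norm_num, le_refl 1⟩ (by norm_num at hc ⊢; linarith)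
      have hb : b = 1 := le_antisymm hb1 (by norm_num at hc hs; nlinarith)
      have ht := h1 (1/10) ⟨by norm_num, by norm_num⟩ (by rw [hb]; norm_num)
      have ha : a = 1/10 := by
        rw [hb] at ht; norm_num at ht; nlinarith [sq_nonneg (a - 1/10)]
      left; exact ⟨ha, hb⟩
    · push_neg at hc
      have ha6 : (3/5 : ℝ) < a := by linarith
      -- player 2's best response is 5/2 (1-a), so b = 5/2 (1-a)
      have hs := h2 ((5/2) * (1 - a)) ⟨by linarith, by linarith⟩ (by norm_num; linarith)
      have hb : b = (5/2) * (1 - a) := by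
        have hble : b ≤ (5/2) * (1 - a) := by norm_num at hab; linarith
        refine le_antisymm hble ?_
        norm_num at hs; nlinarith
      -- show a ≥ 14/15
      have h14 : (14/15 : ℝ) ≤ a := by
        by_contra hlt
        push_neg at hlt
        have hbge : (1/6 : ℝ) < b := by rw [hb]; linarith
        have ht := h1 (11/10 - b) ⟨by linarith, by linarith⟩ (by norm_num; linarith)
        norm_num at ht
        nlinarith [sq_nonneg (a + b - 11/10)]
      right
      exact ⟨a, ⟨h14, ha1⟩, rfl, hb⟩
  · rintro (⟨ha, hb⟩ | ⟨x, ⟨hx1, hx2⟩, ha, hb⟩)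
    · subst ha; subst hb
      refine ⟨⟨by norm_num, by norm_num, by norm_num⟩, ?_, ?_⟩
      · rintro x₁ ⟨h0, h1⟩ hcon
        norm_num
        nlinarith [sq_nonneg (x₁ - 1/10)]
      · rintro x₂ ⟨h0, h1⟩ hcon
        norm_num
        nlinarith [mul_nonneg (by linarith : (0:ℝ) ≤ 1 - x₂)
          (by linarith : (0:ℝ) ≤ 14/5 - x₂)]
    · subst ha; subst hb
      refine ⟨⟨⟨by linarith, hx2⟩, ⟨by linarith, by nlinarith⟩, by norm_num; linarith⟩, ?_, ?_⟩
      · rintro x₁ ⟨h0, h1⟩ hcon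
        have hle : x₁ ≤ a := by norm_num at hcon; linarith
        norm_num
        nlinarith [mul_nonneg (by linarith : (0:ℝ) ≤ a - x₁)
          (by linarith : (0:ℝ) ≤ 4*a - x₁ - 14/5)]
      · rintro x₂ ⟨h0, h1⟩ hcon
        have hle : x₂ ≤ (5/2) * (1 - a) := by norm_num at hcon; linarith
        have key : (0:ℝ) ≤ ((5/2) * (1 - a) - x₂) * (3/2 + a/2 - x₂) :=
          mul_nonneg (by linarith) (by linarith)
        norm_num
        nlinarith [key]
end
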